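/- Let A be a real symmetric n×n matrix (not necessarily nonsingular), M a real symmetric invertible n×n matrix, N := M − A, H := M⁻¹N, and for ℓ ≥ 1 let C^(ℓ) := ∑_{i=0}^{ℓ−1} Hⁱ M⁻¹. If ℓ is even (ℓ ≥ 2), then C^(ℓ) is positive definite if and only if M + N is positive definite, and C^(ℓ) is negative definite if and only if M + N is negative definite. -/

import Mathlib

open Matrix

/-- A real symmetric matrix is positive definite: `vᵀPv > 0` for all nonzero `v`. -/
def Matrix.IsPD {n : ℕ} (P : Matrix (Fin n) (Fin n) ℝ) : Prop :=
  Pᵀ = P ∧ ∀ v : Fin n → ℝ, v ≠ 0 → 0 < v ⬝ᵥ (P *ᵥ v)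

/-- A real symmetric matrix is negative definite: `vᵀPv < 0` for all nonzero `v`. -/
def Matrix.IsND {n : ℕ} (P : Matrix (Fin n) (Fin n) ℝ) : Prop :=
  Pᵀ = P ∧ ∀ v : Fin n → ℝ, v ≠ 0 → v ⬝ᵥ (P *ᵥ v) < 0

namespace StmtAux

variable {n : ℕ}

lemma isPD_iff (P : Matrix (Fin n) (Fin n) ℝ) : P.IsPD ↔ P.PosDef := by
  unfold Matrix.IsPD
  rw [Matrix.posDef_iff_dotProduct_mulVec]
  simp [Matrix.IsHermitian, Matrix.conjTranspose_eq_transpose_of_trivial]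

lemma isND_iff (P : Matrix (Fin n) (Fin n) ℝ) : P.IsND ↔ (-P).PosDef := by
  unfold Matrix.IsND
  rw [Matrix.posDef_iff_dotProduct_mulVec]
  constructor
  · rintro ⟨h1, h2⟩
    refine ⟨?_, fun v hv => ?_⟩
    · simp [Matrix.IsHermitian, Matrix.conjTranspose_eq_transpose_of_trivial, h1]
    · simpa [Matrix.neg_mulVec] using h2 v hv
  · rintro ⟨h1, h2⟩
    refine ⟨?_, fun v hv => ?_⟩
    · have := h1
      simp [Matrix.IsHermitian, Matrix.conjTranspose_eq_transpose_of_trivial] at this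
      exact this
    · have := h2 (x := v) hv
      simp [Matrix.neg_mulVec] at this
      simpa using this

lemma sum_mulVec {ι : Type*} (s : Finset ι) (f : ι → Matrix (Fin n) (Fin n) ℝ) (v : Fin n → ℝ) :
    (∑ j ∈ s, f j) *ᵥ v = ∑ j ∈ s, (f j *ᵥ v) := by
  induction s using Finset.cons_induction with
  | empty => simp [Matrix.zero_mulVec]
  | cons a s ha ih => simp [Finset.sum_cons, Matrix.add_mulVec, ih]

lemma dotProduct_sum' {ι : Type*} (s : Finset ι) (v : Fin n → ℝ) (w : ι → (Fin n → ℝ)) :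
    v ⬝ᵥ (∑ j ∈ s, w j) = ∑ j ∈ s, v ⬝ᵥ w j := by
  induction s using Finset.cons_induction with
  | empty => simp
  | cons a s ha ih => simp [Finset.sum_cons, dotProduct_add, ih]

lemma quad_conj (P E : Matrix (Fin n) (Fin n) ℝ) (v : Fin n → ℝ) :
    v ⬝ᵥ ((Eᵀ * P * E) *ᵥ v) = (E *ᵥ v) ⬝ᵥ (P *ᵥ (E *ᵥ v)) := by
  rw [← Matrix.mulVec_mulVec, ← Matrix.mulVec_mulVec, Matrix.dotProduct_mulVec,
    Matrix.vecMul_transpose]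

lemma mulVec_ne_zero {E : Matrix (Fin n) (Fin n) ℝ} (hE : IsUnit E) {v : Fin n → ℝ}
    (hv : v ≠ 0) : E *ᵥ v ≠ 0 := by
  intro h
  apply hv
  have := Matrix.mulVec_injective_iff_isUnit.mpr hE
  apply this
  simp [h, Matrix.mulVec_zero]

lemma posDef_conj {P E : Matrix (Fin n) (Fin n) ℝ} (hE : IsUnit E) (hP : P.PosDef) :
    (Eᵀ * P * E).PosDef := by
  have hPs : Pᵀ = P := by
    have := hP.1
    simpa [Matrix.IsHermitian, Matrix.conjTranspose_eq_transpose_of_trivial] using this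
  rw [Matrix.posDef_iff_dotProduct_mulVec]
  refine ⟨?_, fun v hv => ?_⟩
  · simp [Matrix.IsHermitian, Matrix.conjTranspose_eq_transpose_of_trivial,
      Matrix.transpose_mul, hPs, Matrix.mul_assoc]
  · have := (Matrix.posDef_iff_dotProduct_mulVec.mp hP).2 (x := E *ᵥ v) (mulVec_ne_zero hE hv)
    simpa [quad_conj] using this

lemma posDef_conj_iff {P E : Matrix (Fin n) (Fin n) ℝ} (hE : IsUnit E) :
    (Eᵀ * P * E).PosDef ↔ P.PosDef := by
  constructor
  · intro h
    have hdet : IsUnit E.det := (Matrix.isUnit_iff_isUnit_det E).mp hE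
    have h2 := posDef_conj (P := Eᵀ * P * E) (E := E⁻¹) (Matrix.isUnit_nonsing_inv_iff.mpr hE) h
    have : (E⁻¹)ᵀ * (Eᵀ * P * E) * E⁻¹ = P := by
      rw [Matrix.transpose_nonsing_inv]
      calc (Eᵀ)⁻¹ * (Eᵀ * P * E) * E⁻¹
          = ((Eᵀ)⁻¹ * Eᵀ) * P * (E * E⁻¹) := by simp only [Matrix.mul_assoc]
        _ = P := by
            rw [Matrix.nonsing_inv_mul _ (by simpa [Matrix.det_transpose] using hdet),
              Matrix.mul_nonsing_inv _ hdet, Matrix.one_mul, Matrix.mul_one]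
    rwa [this] at h2
  · exact posDef_conj hE

lemma dotProduct_self_nonneg' (v : Fin n → ℝ) : 0 ≤ v ⬝ᵥ v :=
  Finset.sum_nonneg fun i _ => mul_self_nonneg _

lemma dotProduct_self_pos' {v : Fin n → ℝ} (hv : v ≠ 0) : 0 < v ⬝ᵥ v := by
  rcases (dotProduct_self_nonneg' v).lt_or_eq with h | h
  · exact h
  · exfalso; apply hv
    funext i
    have := Finset.sum_eq_zero_iff_of_nonneg (fun i _ => mul_self_nonneg (v i)) |>.mp h.symm
    have hi := this i (Finset.mem_univ i)
    simpa [mul_self_eq_zero] using hi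

lemma sum_even_pow_posDef {X : Matrix (Fin n) (Fin n) ℝ} (hX : Xᵀ = X) {m : ℕ} (hm : 0 < m) :
    (∑ j ∈ Finset.range m, X ^ (2 * j)).PosDef := by
  rw [Matrix.posDef_iff_dotProduct_mulVec]
  refine ⟨?_, fun v hv => ?_⟩
  · simp [Matrix.IsHermitian, Matrix.conjTranspose_eq_transpose_of_trivial,
      Matrix.transpose_sum, Matrix.transpose_pow, hX]
  · have key : ∀ j : ℕ, v ⬝ᵥ (X ^ (2 * j) *ᵥ v) = (X ^ j *ᵥ v) ⬝ᵥ (X ^ j *ᵥ v) := by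
      intro j
      have h1 : X ^ (2 * j) = (X ^ j)ᵀ * (X ^ j) := by
        rw [Matrix.transpose_pow, hX, ← pow_add, two_mul]
      rw [h1, ← Matrix.mulVec_mulVec, Matrix.dotProduct_mulVec, Matrix.vecMul_transpose]
    have hstar : (star v : Fin n → ℝ) = v := by simp
    rw [hstar, sum_mulVec, dotProduct_sum']
    apply Finset.sum_pos'
    · intro j _
      rw [key]
      exact dotProduct_self_nonneg' _
    · exact ⟨0, Finset.mem_range.mpr hm, by simpa [key] using dotProduct_self_pos' hv⟩

lemma pow_comm_S {B S : Matrix (Fin n) (Fin n) ℝ} (hBS : B * S = S * Bᵀ) (k : ℕ) :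
    B ^ k * S = S * (Bᵀ) ^ k := by
  induction k with
  | zero => simp
  | succ k ih =>
    rw [pow_succ, pow_succ', Matrix.mul_assoc, hBS, ← Matrix.mul_assoc, ih, Matrix.mul_assoc,
      pow_mul_comm']

lemma fwd {B S : Matrix (Fin n) (Fin n) ℝ} (hS : Sᵀ = S) (hBS : B * S = S * Bᵀ)
    (hSpd : S.PosDef) {m : ℕ} (hm : 0 < m) :
    ((∑ j ∈ Finset.range m, B ^ (2 * j)) * S).PosDef := by
  have hterm : ∀ j : ℕ, B ^ (2 * j) * S = (B ^ j) * S * ((B ^ j)ᵀ) := by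
    intro j
    calc B ^ (2 * j) * S = B ^ j * (B ^ j * S) := by rw [two_mul, pow_add, Matrix.mul_assoc]
      _ = B ^ j * (S * (Bᵀ) ^ j) := by rw [pow_comm_S hBS]
      _ = B ^ j * S * ((B ^ j)ᵀ) := by rw [Matrix.transpose_pow, Matrix.mul_assoc]
  have hsum : (∑ j ∈ Finset.range m, B ^ (2 * j)) * S
      = ∑ j ∈ Finset.range m, (B ^ j) * S * ((B ^ j)ᵀ) := by
    rw [Finset.sum_mul]
    exact Finset.sum_congr rfl fun j _ => hterm j
  rw [Matrix.posDef_iff_dotProduct_mulVec]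
  refine ⟨?_, fun v hv => ?_⟩
  · rw [hsum]
    simp only [Matrix.IsHermitian, Matrix.conjTranspose_eq_transpose_of_trivial,
      Matrix.transpose_sum]
    refine Finset.sum_congr rfl fun j _ => ?_
    simp [Matrix.transpose_mul, hS, Matrix.mul_assoc]
  · have hstar : (star v : Fin n → ℝ) = v := by simp
    rw [hstar, hsum, sum_mulVec, dotProduct_sum']
    have key : ∀ j : ℕ, v ⬝ᵥ ((B ^ j * S * (B ^ j)ᵀ) *ᵥ v)
        = ((B ^ j)ᵀ *ᵥ v) ⬝ᵥ (S *ᵥ ((B ^ j)ᵀ *ᵥ v)) := by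
      intro j
      have : B ^ j * S * (B ^ j)ᵀ = ((B ^ j)ᵀ)ᵀ * S * (B ^ j)ᵀ := by
        rw [Matrix.transpose_transpose]
      rw [this, quad_conj]
    apply Finset.sum_pos'
    · intro j _
      rw [key]
      have := (Matrix.posSemidef_iff_dotProduct_mulVec.mp hSpd.posSemidef).2 ((B ^ j)ᵀ *ᵥ v)
      simpa using this
    · refine ⟨0, Finset.mem_range.mpr hm, ?_⟩
      have := (Matrix.posDef_iff_dotProduct_mulVec.mp hSpd).2 hv
      simpa using this

open scoped MatrixOrder

lemma bwd {B S : Matrix (Fin n) (Fin n) ℝ} (hBS : B * S = S * Bᵀ) {m : ℕ} (hm : 0 < m)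
    (hDpd : ((∑ j ∈ Finset.range m, B ^ (2 * j)) * S).PosDef) : S.PosDef := by
  set q : Matrix (Fin n) (Fin n) ℝ := ∑ j ∈ Finset.range m, B ^ (2 * j) with hq
  set D : Matrix (Fin n) (Fin n) ℝ := q * S with hD
  have hBq : B * q = q * B := by
    rw [hq, Finset.mul_sum, Finset.sum_mul]
    exact Finset.sum_congr rfl fun j _ => (pow_mul_comm' B (2 * j)).symm
  have hBD : B * D = D * Bᵀ := by
    rw [hD, ← Matrix.mul_assoc, hBq, Matrix.mul_assoc, hBS, Matrix.mul_assoc]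
  have hDps := hDpd.posSemidef
  set E : Matrix (Fin n) (Fin n) ℝ := CFC.sqrt D with hE
  have hEE : E * E = D := CFC.sqrt_mul_sqrt_self D hDps.nonneg
  have hEsym : Eᵀ = E := by
    have := (CFC.sqrt_nonneg D).posSemidef.1
    simpa [Matrix.IsHermitian, Matrix.conjTranspose_eq_transpose_of_trivial] using this
  have hEdet : IsUnit E.det := by
    have hDdet : IsUnit D.det := (Matrix.isUnit_iff_isUnit_det D).mp hDpd.isUnit
    rw [← hEE, Matrix.det_mul] at hDdet
    exact isUnit_of_mul_isUnit_left hDdet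
  have hEunit : IsUnit E := (Matrix.isUnit_iff_isUnit_det E).mpr hEdet
  set Bt : Matrix (Fin n) (Fin n) ℝ := E⁻¹ * B * E with hBt
  have hBtsym : Btᵀ = Bt := by
    have h2 : B * (E * E) = (E * E) * Bᵀ := by rw [hEE]; exact hBD
    have h3 : E⁻¹ * (B * (E * E)) * E⁻¹ = E⁻¹ * ((E * E) * Bᵀ) * E⁻¹ := by rw [h2]
    have hL : E⁻¹ * (B * (E * E)) * E⁻¹ = E⁻¹ * B * E := by
      simp only [← Matrix.mul_assoc]
      rw [Matrix.mul_nonsing_inv_cancel_right _ _ hEdet]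
    have hR : E⁻¹ * ((E * E) * Bᵀ) * E⁻¹ = E * Bᵀ * E⁻¹ := by
      simp only [← Matrix.mul_assoc]
      rw [Matrix.nonsing_inv_mul _ hEdet, Matrix.one_mul]
    rw [hBt, Matrix.transpose_mul, Matrix.transpose_mul, hEsym,
      Matrix.transpose_nonsing_inv, hEsym]
    rw [hL, hR] at h3
    simp only [← Matrix.mul_assoc]
    exact h3.symm
  have hpow : ∀ k : ℕ, Bt ^ k = E⁻¹ * B ^ k * E := by
    intro k
    induction k with
    | zero => simp [Matrix.nonsing_inv_mul _ hEdet]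
    | succ k ih =>
      rw [pow_succ, pow_succ, ih, hBt]
      simp only [← Matrix.mul_assoc]
      rw [Matrix.mul_nonsing_inv_cancel_right _ _ hEdet]
  set Q : Matrix (Fin n) (Fin n) ℝ := ∑ j ∈ Finset.range m, Bt ^ (2 * j) with hQ
  have hQpd : Q.PosDef := sum_even_pow_posDef hBtsym hm
  have hQdet : IsUnit Q.det := (Matrix.isUnit_iff_isUnit_det Q).mp hQpd.isUnit
  have hQq : Q = E⁻¹ * q * E := by
    rw [hQ, hq, Finset.mul_sum, Finset.sum_mul]
    exact Finset.sum_congr rfl fun j _ => hpow (2 * j)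
  have hqQ : q = E * Q * E⁻¹ := by
    rw [hQq]
    simp only [← Matrix.mul_assoc]
    rw [Matrix.mul_nonsing_inv _ hEdet, Matrix.one_mul,
      Matrix.mul_nonsing_inv_cancel_right _ _ hEdet]
  have hkey : Q * (E⁻¹ * S) = E := by
    have h4 : E * (Q * (E⁻¹ * S)) = E * E := by
      rw [hEE, hD, hqQ]
      simp only [Matrix.mul_assoc]
    have := congrArg (fun X => E⁻¹ * X) h4
    simpa only [Matrix.nonsing_inv_mul_cancel_left _ _ hEdet] using this
  have hS2 : S = E * (Q⁻¹ * E) := by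
    have h5 : E⁻¹ * S = Q⁻¹ * E := by
      have := congrArg (fun X => Q⁻¹ * X) hkey
      simpa only [Matrix.nonsing_inv_mul_cancel_left _ _ hQdet] using this
    have := congrArg (fun X => E * X) h5
    simpa only [Matrix.mul_nonsing_inv_cancel_left _ _ hEdet] using this
  have : (Eᵀ * Q⁻¹ * E).PosDef := posDef_conj hEunit hQpd.inv
  rw [hEsym, Matrix.mul_assoc] at this
  rwa [hS2]

end StmtAux

theorem stmt_7 {n : ℕ} (A M : Matrix (Fin n) (Fin n) ℝ)
    (hA : Aᵀ = A) (hM : Mᵀ = M) (hMinv : IsUnit M)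
    (ℓ : ℕ) (heven : Even ℓ) (hℓ : 2 ≤ ℓ) :
    (((∑ i ∈ Finset.range ℓ, (M⁻¹ * (M - A)) ^ i) * M⁻¹).IsPD ↔ (M + (M - A)).IsPD) ∧
    (((∑ i ∈ Finset.range ℓ, (M⁻¹ * (M - A)) ^ i) * M⁻¹).IsND ↔ (M + (M - A)).IsND) := by
  obtain ⟨m, hmm⟩ := heven
  have hm : 0 < m := by omega
  set N : Matrix (Fin n) (Fin n) ℝ := M - A with hN
  have hNs : Nᵀ = N := by rw [hN, Matrix.transpose_sub, hM, hA]
  set S : Matrix (Fin n) (Fin n) ℝ := M + N with hS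
  have hSs : Sᵀ = S := by rw [hS, Matrix.transpose_add, hM, hNs]
  have hdet : IsUnit M.det := (Matrix.isUnit_iff_isUnit_det M).mp hMinv
  have hMiT : (M⁻¹)ᵀ = M⁻¹ := by rw [Matrix.transpose_nonsing_inv, hM]
  set B : Matrix (Fin n) (Fin n) ℝ := N * M⁻¹ with hB
  have hBt : Bᵀ = M⁻¹ * N := by rw [hB, Matrix.transpose_mul, hMiT, hNs]
  have hBS : B * S = S * Bᵀ := by
    rw [hB, hBt, hS]
    rw [Matrix.mul_add, Matrix.add_mul]
    rw [Matrix.mul_assoc, Matrix.nonsing_inv_mul _ hdet, Matrix.mul_one,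
      Matrix.mul_nonsing_inv_cancel_left _ _ hdet, Matrix.mul_assoc]
  have hMH : ∀ i : ℕ, M * (M⁻¹ * N) ^ i = B ^ i * M := by
    intro i
    induction i with
    | zero => simp
    | succ i ih =>
      rw [pow_succ, pow_succ, ← Matrix.mul_assoc, ih, hB]
      simp only [Matrix.mul_assoc]
      rw [Matrix.mul_nonsing_inv_cancel_left _ _ hdet,
        Matrix.nonsing_inv_mul _ hdet, Matrix.mul_one]
  have hgeo : ∀ k : ℕ, (∑ i ∈ Finset.range (k + k), B ^ i)
      = (∑ j ∈ Finset.range k, B ^ (2 * j)) * (1 + B) := by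
    intro k
    induction k with
    | zero => simp
    | succ k ih =>
      have h1 : k + 1 + (k + 1) = (k + k) + 1 + 1 := by omega
      rw [h1, Finset.sum_range_succ, Finset.sum_range_succ, ih, Finset.sum_range_succ,
        add_mul]
      have h2 : B ^ (2 * k) * (1 + B) = B ^ (k + k) + B ^ (k + k + 1) := by
        rw [Matrix.mul_add, Matrix.mul_one, two_mul, pow_succ]
      rw [h2]
      abel
  set q : Matrix (Fin n) (Fin n) ℝ := ∑ j ∈ Finset.range m, B ^ (2 * j) with hq
  set Cmat : Matrix (Fin n) (Fin n) ℝ :=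
    (∑ i ∈ Finset.range ℓ, (M⁻¹ * N) ^ i) * M⁻¹ with hC
  have hD : M * Cmat * M = q * S := by
    rw [hC, ← Matrix.mul_assoc, Matrix.mul_assoc _ M⁻¹ M, Matrix.nonsing_inv_mul _ hdet,
      Matrix.mul_one, Finset.mul_sum]
    have h6 : ∑ i ∈ Finset.range ℓ, M * (M⁻¹ * N) ^ i = ∑ i ∈ Finset.range ℓ, B ^ i * M :=
      Finset.sum_congr rfl fun i _ => hMH i
    rw [h6, ← Finset.sum_mul, hmm, hgeo m, ← hq, Matrix.mul_assoc]
    congr 1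
    rw [Matrix.add_mul, Matrix.one_mul, hB,
      Matrix.nonsing_inv_mul_cancel_right _ _ hdet, hS]
  have hMiu : IsUnit (M⁻¹) := Matrix.isUnit_nonsing_inv_iff.mpr hMinv
  have hCrep : Cmat = (M⁻¹)ᵀ * (q * S) * M⁻¹ := by
    rw [hMiT, ← hD]
    simp only [← Matrix.mul_assoc]
    rw [Matrix.nonsing_inv_mul _ hdet, Matrix.one_mul,
      Matrix.mul_nonsing_inv_cancel_right _ _ hdet]
  constructor
  · rw [StmtAux.isPD_iff, StmtAux.isPD_iff, hCrep, StmtAux.posDef_conj_iff hMiu]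
    exact ⟨fun h => StmtAux.bwd hBS hm h, fun h => StmtAux.fwd hSs hBS h hm⟩
  · rw [StmtAux.isND_iff, StmtAux.isND_iff, hCrep]
    have hneg : -((M⁻¹)ᵀ * (q * S) * M⁻¹) = (M⁻¹)ᵀ * (q * (-S)) * M⁻¹ := by
      simp [Matrix.mul_neg, Matrix.neg_mul]
    rw [hneg, StmtAux.posDef_conj_iff hMiu]
    have hBS' : B * (-S) = (-S) * Bᵀ := by
      rw [Matrix.mul_neg, Matrix.neg_mul, hBS]
    have hSs' : (-S)ᵀ = -S := by rw [Matrix.transpose_neg, hSs]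
    exact ⟨fun h => StmtAux.bwd hBS' hm h, fun h => StmtAux.fwd hSs' hBS' h hm⟩
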